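/- Let m ≥ 1, R > 1, and let 𝒜 = (A_n)_{n∈ℤ} be linear isomorphisms of ℝ^{m+1} with ‖A_n‖ < R and ‖A_n⁻¹‖ < R. Let (e_k)_{k∈ℤ} be unit vectors in ℝ^{m+1} with e_{k+1} = A_k e_k / ‖A_k e_k‖ for all k; let S_k be the orthogonal complement of e_k, Q_k the orthogonal projection of ℝ^{m+1} onto S_k, and B_k : S_k → S_{k+1} the map B_k v = Q_{k+1}(A_k v). If 𝒜 has property SG(γ) for some γ ∈ (0,1), then the projected system (B_k) also has property SG(γ): there exists L > 0 such that for every i ∈ ℤ, N ≥ 1 and every sequence (w_k ∈ S_k)_{i+1 ≤ k ≤ i+N} with ‖w_k‖ ≤ 1, there exists (v_k ∈ S_k)_{i ≤ k ≤ i+N} with v_{k+1} = B_k v_k + w_{k+1} for i ≤ k ≤ i+N−1 and ‖v_k‖ ≤ L·N^γ. -/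

import Mathlib

noncomputable section

abbrev Euc (m : ℕ) := EuclideanSpace ℝ (Fin m)

/-- Slow growth property with exponent γ. -/
def SG (m : ℕ) (A : ℤ → Euc m ≃L[ℝ] Euc m) (γ : ℝ) : Prop :=
  ∃ L : ℝ, 0 < L ∧ ∀ (i : ℤ) (N : ℕ), 1 ≤ N →
    ∀ w : ℤ → Euc m, (∀ k : ℤ, i + 1 ≤ k → k ≤ i + N → ‖w k‖ ≤ 1) →
    ∃ v : ℤ → Euc m,
      (∀ k : ℤ, i ≤ k → k ≤ i + N - 1 → v (k + 1) = A k (v k) + w (k + 1)) ∧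
      (∀ k : ℤ, i ≤ k → k ≤ i + N → ‖v k‖ ≤ L * (N : ℝ) ^ γ)

/-- The orthogonal complement `S k` of the unit vector `e k`. -/
def Sperp (m : ℕ) (e : ℤ → Euc m) (k : ℤ) : Submodule ℝ (Euc m) :=
  (ℝ ∙ e k)ᗮ

/-- The orthogonal projection of `Euc m` onto `S k`, as a map `Euc m → Euc m`. -/
def projS (m : ℕ) (e : ℤ → Euc m) (k : ℤ) : Euc m →L[ℝ] Euc m :=
  (Sperp m e k).subtypeL.comp (Submodule.orthogonalProjection (Sperp m e k))

/-- The projected system `B k = Q (k+1) ∘ A k` inherits the slow growth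
property SG(γ) from the full system (induction step of Theorem 3.5). -/
theorem projected_system_has_slow_growth
    (m : ℕ) (hm : 1 ≤ m) (R : ℝ) (hR : 1 < R)
    (A : ℤ → Euc (m + 1) ≃L[ℝ] Euc (m + 1))
    (hAbound : ∀ n : ℤ, ‖(A n : Euc (m + 1) →L[ℝ] Euc (m + 1))‖ < R ∧
      ‖((A n).symm : Euc (m + 1) →L[ℝ] Euc (m + 1))‖ < R)
    (e : ℤ → Euc (m + 1)) (he : ∀ k : ℤ, ‖e k‖ = 1)
    (herec : ∀ k : ℤ, e (k + 1) = ‖A k (e k)‖⁻¹ • A k (e k))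
    (γ : ℝ) (hγ : γ ∈ Set.Ioo (0 : ℝ) 1) (hSG : SG (m + 1) A γ) :
    ∃ L : ℝ, 0 < L ∧ ∀ (i : ℤ) (N : ℕ), 1 ≤ N →
      ∀ w : ℤ → Euc (m + 1),
        (∀ k : ℤ, i + 1 ≤ k → k ≤ i + N → w k ∈ Sperp (m + 1) e k) →
        (∀ k : ℤ, i + 1 ≤ k → k ≤ i + N → ‖w k‖ ≤ 1) →
      ∃ v : ℤ → Euc (m + 1),
        (∀ k : ℤ, i ≤ k → k ≤ i + N → v k ∈ Sperp (m + 1) e k) ∧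
        (∀ k : ℤ, i ≤ k → k ≤ i + N - 1 →
          v (k + 1) = projS (m + 1) e (k + 1) (A k (v k)) + w (k + 1)) ∧
        (∀ k : ℤ, i ≤ k → k ≤ i + N → ‖v k‖ ≤ L * (N : ℝ) ^ γ) := by
  obtain ⟨hγ0, hγ1⟩ := hγ
  obtain ⟨L, hL, hSG'⟩ := hSG
  refine ⟨L, hL, fun i N hN w hwmem hwnorm => ?_⟩
  obtain ⟨v, hvrec, hvnorm⟩ := hSG' i N hN w hwnorm
  set K : ℤ → Submodule ℝ (Euc (m + 1)) := Sperp (m + 1) e with hK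
  refine ⟨fun k => projS (m + 1) e k (v k), ?_, ?_, ?_⟩
  · intro k _ _
    exact SetLike.coe_mem _
  · intro k hk1 hk2
    have hrec := hvrec k hk1 hk2
    -- decompose v k
    have hmem : v k - projS (m + 1) e k (v k) ∈ (K k)ᗮ :=
      Submodule.sub_starProjection_mem_orthogonal (K := K k) (v k)
    have horth : (K k)ᗮ = (ℝ ∙ e k) := by
      simp [hK, Sperp, Submodule.orthogonal_orthogonal]
    rw [horth, Submodule.mem_span_singleton] at hmem
    obtain ⟨t, ht⟩ := hmem
    have hvk : v k = projS (m + 1) e k (v k) + t • e k := by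
      rw [ht]; abel
    -- A k (e k) is parallel to e (k+1)
    have hAe : A k (e k) ≠ 0 := by
      intro h
      have h1 : e k = 0 := by
        have := congrArg (A k).symm h
        simpa using this
      have h2 := he k
      rw [h1, norm_zero] at h2
      norm_num at h2
    have hAe' : A k (e k) = ‖A k (e k)‖ • e (k + 1) := by
      rw [herec k, smul_smul, mul_inv_cancel₀ (norm_ne_zero_iff.mpr hAe), one_smul]
    have hproj_e : projS (m + 1) e (k + 1) (e (k + 1)) = 0 := by
      have hmem' : e (k + 1) ∈ (K (k + 1))ᗮ := by
        have : (K (k + 1))ᗮ = (ℝ ∙ e (k + 1)) := by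
          simp [hK, Sperp, Submodule.orthogonal_orthogonal]
        rw [this]
        exact Submodule.mem_span_singleton_self _
      simp only [projS, ContinuousLinearMap.comp_apply]
      rw [(Submodule.orthogonalProjectionOnto_apply_of_mem_orthogonal hmem' :
        Submodule.orthogonalProjection _ (e (k + 1)) = 0)]
      simp
    have hw : projS (m + 1) e (k + 1) (w (k + 1)) = w (k + 1) := by
      have hwm : w (k + 1) ∈ Sperp (m + 1) e (k + 1) := hwmem (k + 1) (by omega) (by omega)
      simp only [projS, ContinuousLinearMap.comp_apply, Submodule.subtypeL_apply]
      exact congrArg Subtype.val (Submodule.orthogonalProjection_mem_subspace_eq_self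
        (K := Sperp (m + 1) e (k + 1)) ⟨w (k + 1), hwm⟩)
    calc projS (m + 1) e (k + 1) (v (k + 1))
        = projS (m + 1) e (k + 1) (A k (v k) + w (k + 1)) := by rw [hrec]
      _ = projS (m + 1) e (k + 1) (A k (v k)) + w (k + 1) := by
          rw [map_add, hw]
      _ = projS (m + 1) e (k + 1) (A k (projS (m + 1) e k (v k))) + w (k + 1) := by
          congr 1
          conv_lhs => rw [hvk]
          rw [map_add, map_add, map_smul, map_smul, hAe', map_smul, hproj_e,
            smul_zero, smul_zero, add_zero]
  · intro k hk1 hk2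
    have hle : ‖projS (m + 1) e k (v k)‖ ≤ ‖v k‖ := by
      simp only [projS, ContinuousLinearMap.comp_apply, Submodule.subtypeL_apply,
        Submodule.norm_coe]
      calc ‖Submodule.orthogonalProjection (Sperp (m + 1) e k) (v k)‖
          ≤ ‖Submodule.orthogonalProjection (Sperp (m + 1) e k)‖ * ‖v k‖ :=
            (Submodule.orthogonalProjection (Sperp (m + 1) e k)).le_opNorm _
        _ ≤ 1 * ‖v k‖ :=
            mul_le_mul_of_nonneg_right (Submodule.orthogonalProjectionOnto_norm_le _) (norm_nonneg _)
        _ = ‖v k‖ := one_mul _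
    exact hle.trans (hvnorm k hk1 hk2)
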